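/- For every sufficiently small ε > 0 there exist δ, α with 0 < α < δ < ε and n_0 ∈ ℕ such that for all n ≥ n_0 the following holds. Let γ ∈ [−α, 0.03] and let F ⊆ [n] with |F| = (1/2 − γ)n, where F = A ∪ B with |A| ≤ αn and B a sum-free subset of [(1/2−γ)n, n] ∩ [n]. If |F ∩ [n/2]| ≥ εn, then the number of maximal sum-free subsets of [n] contained in F is at most 2^{(1/4 − δ)n}. -/

import Mathlib

/-- A set of naturals is sum-free if it contains no Schur triple `x + y = z`. -/
def SumFree (S : Finset ℕ) : Prop := ∀ x ∈ S, ∀ y ∈ S, x + y ∉ S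

/-- `M` is a maximal sum-free subset of `[n] = {1, …, n}`. -/
def MaxSF (n : ℕ) (M : Finset ℕ) : Prop :=
  M ⊆ Finset.Icc 1 n ∧ SumFree M ∧
    ∀ M' : Finset ℕ, M' ⊆ Finset.Icc 1 n → SumFree M' → M ⊆ M' → M = M'

/-- The number of maximal sum-free subsets of `[n]` contained in `F`. -/
noncomputable def fmaxIn (n : ℕ) (F : Finset ℕ) : ℕ :=
  Set.ncard {M : Finset ℕ | MaxSF n M ∧ M ⊆ F}

namespace TypeB

variable (adj : ℕ → ℕ → Prop) [DecidableRel adj]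

def Indep (T : Finset ℕ) : Prop := ∀ a ∈ T, ∀ b ∈ T, ¬ adj a b

def IsMIS (V T : Finset ℕ) : Prop :=
  T ⊆ V ∧ Indep adj T ∧ ∀ v ∈ V, v ∉ T → ∃ t ∈ T, adj v t

noncomputable def misSet (V : Finset ℕ) : Finset (Finset ℕ) :=
  @Finset.filter _ (fun T => IsMIS adj V T) (fun _ => Classical.propDecidable _) V.powerset

lemma mem_misSet {V T : Finset ℕ} : T ∈ misSet adj V ↔ IsMIS adj V T := by
  have h := @Finset.mem_filter (Finset ℕ) (fun T => IsMIS adj V T)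
    (fun _ => Classical.propDecidable _) V.powerset T
  rw [misSet, h, Finset.mem_powerset]
  exact ⟨fun h => h.2, fun h => ⟨h.1, h⟩⟩

lemma misSet_subset_powerset (V : Finset ℕ) : misSet adj V ⊆ V.powerset := by
  intro T hT
  exact Finset.mem_powerset.mpr ((mem_misSet adj).mp hT).1

lemma card_filter_le_mis (hsymm : ∀ a b, adj a b → adj b a)
    (V : Finset ℕ) (x : ℕ) (E : Finset ℕ) (hxE : x ∉ E) :
    ((misSet adj V).filter (fun T => x ∈ T ∧ ∀ e ∈ E, e ∉ T)).card
      ≤ (misSet adj (V \ (insert x (V.filter (fun w => adj x w)) ∪ E))).card := by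
  set D := insert x (V.filter (fun w => adj x w)) ∪ E with hD
  apply Finset.card_le_card_of_injOn (fun T => T.erase x)
  · intro T hT
    rw [Finset.mem_coe, Finset.mem_filter] at hT
    obtain ⟨hTm, hxT, hET⟩ := hT
    rw [mem_misSet] at hTm
    obtain ⟨hTV, hInd, hDom⟩ := hTm
    rw [Finset.mem_coe, mem_misSet]
    refine ⟨?_, ?_, ?_⟩
    · intro t ht
      have htx := Finset.mem_erase.mp ht
      rw [Finset.mem_sdiff]
      refine ⟨hTV htx.2, ?_⟩
      rw [hD, Finset.mem_union, Finset.mem_insert]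
      push_neg
      refine ⟨⟨htx.1, ?_⟩, fun hc => hET t hc htx.2⟩
      intro hc
      exact hInd x hxT t htx.2 ((Finset.mem_filter.mp hc).2)
    · intro a ha b hb
      exact hInd a (Finset.mem_of_mem_erase ha) b (Finset.mem_of_mem_erase hb)
    · intro v hv hvT
      rw [Finset.mem_sdiff] at hv
      have hvx : v ≠ x := by
        intro h; subst h
        exact hv.2 (by rw [hD]; exact Finset.mem_union_left _ (Finset.mem_insert_self _ _))
      have hvT' : v ∉ T := by
        intro h; exact hvT (Finset.mem_erase.mpr ⟨hvx, h⟩)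
      obtain ⟨t, htT, hadj⟩ := hDom v hv.1 hvT'
      have htx : t ≠ x := by
        intro h; subst h
        apply hv.2
        rw [hD]
        exact Finset.mem_union_left _ (Finset.mem_insert.mpr (Or.inr
          (Finset.mem_filter.mpr ⟨hv.1, hsymm _ _ hadj⟩)))
      exact ⟨t, Finset.mem_erase.mpr ⟨htx, htT⟩, hadj⟩
  · intro T1 h1 T2 h2 he
    have hx1 := (Finset.mem_filter.mp h1).2.1
    have hx2 := (Finset.mem_filter.mp h2).2.1
    have := congrArg (insert x) he
    rwa [Finset.insert_erase hx1, Finset.insert_erase hx2] at this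

lemma omega_drop (V W D : Finset ℕ) (hWV : W ⊆ V) (hDV : D ⊆ V) :
    (((V \ D) \ (W ∩ (V \ D))).card : ℝ) + 1.2 * ((W ∩ (V \ D)).card : ℝ)
      = ((((V \ W).card : ℝ) + 1.2 * (W.card : ℝ))
        - (((D.card : ℝ)) + 0.2 * ((D ∩ W).card : ℝ))) := by
  have e1 : (V \ D) \ (W ∩ (V \ D)) = (V \ W) \ D := by
    ext a
    simp only [Finset.mem_sdiff, Finset.mem_inter]
    tauto
  have e2 : W ∩ (V \ D) = W \ D := by
    ext a
    simp only [Finset.mem_sdiff, Finset.mem_inter]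
    constructor
    · rintro ⟨h1, _, h3⟩; exact ⟨h1, h3⟩
    · rintro ⟨h1, h2⟩; exact ⟨h1, hWV h1, h2⟩
  have n1 : ((V \ W) \ D).card + (D \ W).card = (V \ W).card := by
    have : (V \ W) ∩ D = D \ W := by
      ext a
      simp only [Finset.mem_sdiff, Finset.mem_inter]
      constructor
      · rintro ⟨⟨h1, h2⟩, h3⟩; exact ⟨h3, h2⟩
      · rintro ⟨h1, h2⟩; exact ⟨⟨hDV h1, h2⟩, h1⟩
    rw [← this]
    exact Finset.card_sdiff_add_card_inter _ _
  have n2 : (W \ D).card + (D ∩ W).card = W.card := by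
    rw [Finset.inter_comm D W]
    exact Finset.card_sdiff_add_card_inter _ _
  have n3 : (D \ W).card + (D ∩ W).card = D.card :=
    Finset.card_sdiff_add_card_inter _ _
  rw [e1, e2]
  have c1 : (((V \ W) \ D).card : ℝ) = ((V \ W).card : ℝ) - ((D \ W).card : ℝ) := by
    have := congrArg (Nat.cast (R := ℝ)) n1; push_cast at this; linarith
  have c2 : ((W \ D).card : ℝ) = (W.card : ℝ) - ((D ∩ W).card : ℝ) := by
    have := congrArg (Nat.cast (R := ℝ)) n2; push_cast at this; linarith
  have c3 : ((D \ W).card : ℝ) = (D.card : ℝ) - ((D ∩ W).card : ℝ) := by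
    have := congrArg (Nat.cast (R := ℝ)) n3; push_cast at this; linarith
  rw [c1, c2, c3]
  ring



lemma nat_sq_le_two_pow : ∀ k : ℕ, k ≠ 3 → k ^ 2 ≤ 2 ^ k := by
  intro k hk
  induction k with
  | zero => norm_num
  | succ m ih =>
    rcases Nat.lt_or_ge m 4 with h | h
    · interval_cases m <;> simp_all <;> norm_num
    · have h1 := ih (by omega)
      have h2 : (m + 1) ^ 2 ≤ 2 * m ^ 2 := by nlinarith
      calc (m + 1) ^ 2 ≤ 2 * m ^ 2 := h2
        _ ≤ 2 * 2 ^ m := by omega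
        _ = 2 ^ (m + 1) := by ring

lemma real_le_two_rpow {k : ℕ} (hk : k ≠ 3) : (k : ℝ) ≤ (2 : ℝ) ^ ((k : ℝ) / 2) := by
  have h0 : (0 : ℝ) < (2 : ℝ) ^ ((k : ℝ) / 2) := Real.rpow_pos_of_pos (by norm_num) _
  have hsq : ((k : ℝ)) ^ 2 ≤ ((2 : ℝ) ^ ((k : ℝ) / 2)) ^ 2 := by
    have he : ((2 : ℝ) ^ ((k : ℝ) / 2)) ^ 2 = (2 : ℝ) ^ (k : ℝ) := by
      rw [← Real.rpow_natCast ((2 : ℝ) ^ ((k : ℝ) / 2)) 2, ← Real.rpow_mul (by norm_num)]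
      norm_num
    rw [he]
    have hn : ((k ^ 2 : ℕ) : ℝ) ≤ ((2 ^ k : ℕ) : ℝ) := by
      exact_mod_cast nat_sq_le_two_pow k hk
    push_cast at hn
    rw [Real.rpow_natCast]
    exact hn
  nlinarith [(Nat.cast_nonneg k : (0:ℝ) ≤ (k:ℝ)), h0.le]

lemma three_le_rpow17 : (3 : ℝ) ≤ (2 : ℝ) ^ (1.7 : ℝ) := by
  have h0 : (0 : ℝ) ≤ (2 : ℝ) ^ (1.7 : ℝ) := (Real.rpow_pos_of_pos (by norm_num) _).le
  have he : ((2 : ℝ) ^ (1.7 : ℝ)) ^ (10 : ℕ) = (2 : ℝ) ^ (17 : ℕ) := by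
    rw [← Real.rpow_natCast ((2 : ℝ) ^ (1.7 : ℝ)) 10, ← Real.rpow_mul (by norm_num),
      ← Real.rpow_natCast 2 17]
    norm_num
  refine le_of_pow_le_pow_left₀ (n := 10) (by norm_num) h0 ?_
  rw [he]
  norm_num

lemma rpow_neg32_le : (2 : ℝ) ^ (-(3 : ℝ) / 2) ≤ 3 / 8 := by
  have h0 : (0 : ℝ) < (2 : ℝ) ^ ((3 : ℝ) / 2) := Real.rpow_pos_of_pos (by norm_num) _
  have h1 : (8 : ℝ) / 3 ≤ (2 : ℝ) ^ ((3 : ℝ) / 2) := by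
    have he : ((2 : ℝ) ^ ((3 : ℝ) / 2)) ^ (2 : ℕ) = (2 : ℝ) ^ (3 : ℕ) := by
      rw [← Real.rpow_natCast ((2 : ℝ) ^ ((3 : ℝ) / 2)) 2, ← Real.rpow_mul (by norm_num),
        ← Real.rpow_natCast 2 3]
      norm_num
    refine le_of_pow_le_pow_left₀ (n := 2) (by norm_num) h0.le ?_
    rw [he]
    norm_num
  have h2 : (2 : ℝ) ^ (-(3 : ℝ) / 2) = ((2 : ℝ) ^ ((3 : ℝ) / 2))⁻¹ := by
    rw [← Real.rpow_neg (by norm_num)]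
    norm_num
  rw [h2]
  rw [inv_le_comm₀ h0 (by norm_num)]
  linarith



lemma bound_d0 (ω : ℝ) : (2:ℝ)^((ω - 1)/2) ≤ (2:ℝ)^(ω/2) :=
  Real.rpow_le_rpow_of_exponent_le (by norm_num) (by linarith)

lemma bound_d1 (ω : ℝ) : (2:ℝ)^((ω - 2)/2) + (2:ℝ)^((ω - 2)/2) ≤ (2:ℝ)^(ω/2) := by
  have hP : (0:ℝ) < (2:ℝ)^(ω/2) := Real.rpow_pos_of_pos (by norm_num) _
  have h1 : (2:ℝ)^((ω - 2)/2) = (2:ℝ)^(ω/2) * (2:ℝ)^(-(1:ℝ)) := by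
    rw [show (ω - 2)/2 = ω/2 + (-(1:ℝ)) by ring, Real.rpow_add (by norm_num)]
  have h2 : (2:ℝ)^(-(1:ℝ)) = 1/2 := by
    rw [Real.rpow_neg_one]; norm_num
  rw [h1, h2]; ring_nf; linarith

lemma bound_ge3 (ω : ℝ) (k : ℕ) (hk : k ≠ 3) :
    (k:ℝ) * (2:ℝ)^((ω - k)/2) ≤ (2:ℝ)^(ω/2) := by
  have h0 : (0:ℝ) ≤ (2:ℝ)^((ω - k)/2) := (Real.rpow_pos_of_pos (by norm_num) _).le
  calc (k:ℝ) * (2:ℝ)^((ω - k)/2) ≤ (2:ℝ)^((k:ℝ)/2) * (2:ℝ)^((ω - k)/2) :=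
        mul_le_mul_of_nonneg_right (real_le_two_rpow hk) h0
    _ = (2:ℝ)^((k:ℝ)/2 + (ω - k)/2) := (Real.rpow_add (by norm_num) _ _).symm
    _ = (2:ℝ)^(ω/2) := by ring_nf

lemma bound_d2a (ω : ℝ) :
    (2:ℝ)^((ω - 3.4)/2) + (2:ℝ)^((ω - 3.4)/2) + (2:ℝ)^((ω - 3.4)/2) ≤ (2:ℝ)^(ω/2) := by
  have hP : (0:ℝ) < (2:ℝ)^(ω/2) := Real.rpow_pos_of_pos (by norm_num) _
  have h1 : (2:ℝ)^((ω - 3.4)/2) = (2:ℝ)^(ω/2) * (2:ℝ)^(-(1.7:ℝ)) := by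
    rw [show (ω - 3.4)/2 = ω/2 + (-(1.7:ℝ)) by ring, Real.rpow_add (by norm_num)]
  have h2 : (2:ℝ)^(-(1.7:ℝ)) = ((2:ℝ)^(1.7:ℝ))⁻¹ := by
    rw [← Real.rpow_neg (by norm_num)]
  have h4 : (0:ℝ) < (2:ℝ)^(1.7:ℝ) := Real.rpow_pos_of_pos (by norm_num) _
  have h5 : (3:ℝ) * ((2:ℝ)^(1.7:ℝ))⁻¹ ≤ 1 := by
    rw [mul_inv_le_iff₀ h4]
    linarith [three_le_rpow17]
  rw [h1, h2]
  nlinarith [hP.le, (inv_pos.mpr h4).le]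

lemma bound_d2b (ω : ℝ) :
    (2:ℝ)^((ω - 3)/2) + (2:ℝ)^((ω - 3)/2) + (2:ℝ)^((ω - 4)/2) ≤ (2:ℝ)^(ω/2) := by
  have hP : (0:ℝ) < (2:ℝ)^(ω/2) := Real.rpow_pos_of_pos (by norm_num) _
  have h1 : (2:ℝ)^((ω - 3)/2) = (2:ℝ)^(ω/2) * (2:ℝ)^(-(3:ℝ)/2) := by
    rw [show (ω - 3)/2 = ω/2 + (-(3:ℝ)/2) by ring, Real.rpow_add (by norm_num)]
  have h2 : (2:ℝ)^((ω - 4)/2) = (2:ℝ)^(ω/2) * (2:ℝ)^(-(2:ℝ)) := by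
    rw [show (ω - 4)/2 = ω/2 + (-(2:ℝ)) by ring, Real.rpow_add (by norm_num)]
  have h3 : (2:ℝ)^(-(2:ℝ)) = 1/4 := by
    rw [show (-(2:ℝ)) = ((-2 : ℤ) : ℝ) by norm_num, Real.rpow_intCast]
    norm_num
  have h4 := rpow_neg32_le
  have h5 : (0:ℝ) ≤ (2:ℝ)^(-(3:ℝ)/2) := (Real.rpow_pos_of_pos (by norm_num) _).le
  rw [h1, h2, h3]
  nlinarith [hP.le]


theorem mis_card_bound (hsymm : ∀ a b, adj a b → adj b a) (hirr : ∀ a, ¬ adj a a)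
    (V : Finset ℕ) : ∀ W : Finset ℕ, W ⊆ V →
    (∀ a ∈ V, ∀ b ∈ V, ∀ c ∈ V, adj a b → adj b c → adj a c → a ∉ W → b ∉ W → False) →
    ((misSet adj V).card : ℝ) ≤ 2 ^ ((((V \ W).card : ℝ) + 1.2 * (W.card : ℝ)) / 2) := by
  induction V using Finset.strongInduction with
  | _ V ih =>
  intro W hWV htri
  rcases Finset.eq_empty_or_nonempty V with hVe | hVne
  · subst hVe
    have hWe : W = ∅ := Finset.subset_empty.mp hWV
    subst hWe
    have h1 : (misSet adj ∅).card ≤ 1 := by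
      have hsub : misSet adj ∅ ⊆ (∅ : Finset ℕ).powerset := misSet_subset_powerset adj ∅
      have := Finset.card_le_card hsub
      simpa using this
    have h2 : ((misSet adj ∅).card : ℝ) ≤ 1 := by exact_mod_cast h1
    have h3 : ((((∅ \ ∅ : Finset ℕ).card : ℝ) + 1.2 * ((∅ : Finset ℕ).card : ℝ)) / 2) = 0 := by
      simp
    rw [h3, Real.rpow_zero]
    exact h2
  · obtain ⟨u, huV, hmin⟩ := V.exists_min_image
      (fun v => (V.filter (fun w => adj v w)).card) hVne
    set N : Finset ℕ := V.filter (fun w => adj u w) with hN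
    set d : ℕ := N.card with hd
    have hNV : N ⊆ V := Finset.filter_subset _ _
    have huN : u ∉ N := fun h => hirr u (Finset.mem_filter.mp h).2
    set cls : Finset ℕ → ℕ :=
      fun T => if h : (T ∩ N).Nonempty then (T ∩ N).min' h else u with hcls
    have hclsmem : ∀ T ∈ misSet adj V, cls T ∈ insert u N := by
      intro T _
      by_cases h : (T ∩ N).Nonempty
      · have hm : (T ∩ N).min' h ∈ T ∩ N := Finset.min'_mem _ h
        have h2 : cls T = (T ∩ N).min' h := by simp only [hcls, dif_pos h]
        rw [h2]
        exact Finset.mem_insert_of_mem (Finset.mem_of_mem_inter_right hm)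
      · have h2 : cls T = u := by simp only [hcls, dif_neg h]
        rw [h2]; exact Finset.mem_insert_self _ _
    set Fb : ℕ → ℕ := fun x => ((misSet adj V).filter (fun T => cls T = x)).card with hFb
    have hpart : (misSet adj V).card = ∑ x ∈ insert u N, Fb x :=
      Finset.card_eq_sum_card_fiberwise hclsmem
    set EE : ℕ → Finset ℕ :=
      fun x => (N.filter (fun y => y < x)) \ (insert x (V.filter (fun w => adj x w))) with hEE
    set DD : ℕ → Finset ℕ :=
      fun x => insert x (V.filter (fun w => adj x w)) ∪ EE x with hDD
    have hxV : ∀ x ∈ insert u N, x ∈ V := by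
      intro x hx
      rcases Finset.mem_insert.mp hx with rfl | hx'
      · exact huV
      · exact hNV hx'
    have hxDD : ∀ x : ℕ, x ∈ DD x := fun x =>
      Finset.mem_union_left _ (Finset.mem_insert_self _ _)
    have hDDV : ∀ x ∈ insert u N, DD x ⊆ V := by
      intro x hx
      apply Finset.union_subset
      · exact Finset.insert_subset (hxV x hx) (Finset.filter_subset _ _)
      · exact Finset.sdiff_subset.trans ((Finset.filter_subset _ _).trans hNV)
    have hVss : ∀ x ∈ insert u N, V \ DD x ⊂ V := by
      intro x hx
      exact Finset.sdiff_ssubset (hDDV x hx) ⟨x, hxDD x⟩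
    have hfibsub : ∀ x ∈ insert u N,
        (misSet adj V).filter (fun T => cls T = x)
          ⊆ (misSet adj V).filter (fun T => x ∈ T ∧ ∀ e ∈ EE x, e ∉ T) := by
      intro x hx T hT
      rw [Finset.mem_filter] at hT
      obtain ⟨hTm, hclsT⟩ := hT
      obtain ⟨hTV, hInd, hDom⟩ := (mem_misSet adj).mp hTm
      rw [Finset.mem_filter]
      refine ⟨hTm, ?_⟩
      by_cases huT : u ∈ T
      · have hTN : ∀ y ∈ N, y ∉ T := by
          intro y hy hyT
          exact hInd u huT y hyT (Finset.mem_filter.mp hy).2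
        have hTNe : ¬ (T ∩ N).Nonempty := by
          rintro ⟨y, hy⟩
          rw [Finset.mem_inter] at hy
          exact hTN y hy.2 hy.1
        have hclsu : cls T = u := by simp only [hcls, dif_neg hTNe]
        have hxu : x = u := by rw [← hclsT, hclsu]
        subst hxu
        refine ⟨huT, ?_⟩
        intro e he
        have heN : e ∈ N := Finset.mem_of_mem_filter e (Finset.mem_sdiff.mp he).1
        exact hTN e heN
      · have hne : (T ∩ N).Nonempty := by
          obtain ⟨t, htT, hadj⟩ := hDom u huV huT
          exact ⟨t, Finset.mem_inter.mpr ⟨htT, Finset.mem_filter.mpr ⟨hTV htT, hadj⟩⟩⟩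
        have hclsx : (T ∩ N).min' hne = x := by
          have hc : cls T = (T ∩ N).min' hne := by simp only [hcls, dif_pos hne]
          rw [← hc, hclsT]
        have hxT : x ∈ T := by
          have hm := Finset.min'_mem _ hne
          rw [hclsx] at hm
          exact (Finset.mem_inter.mp hm).1
        refine ⟨hxT, ?_⟩
        intro e he heT
        rw [Finset.mem_sdiff, Finset.mem_filter] at he
        have hemem : e ∈ T ∩ N := Finset.mem_inter.mpr ⟨heT, he.1.1⟩
        have hle := Finset.min'_le _ e hemem
        rw [hclsx] at hle
        have := he.1.2
        omega
    have hfible : ∀ x ∈ insert u N, Fb x ≤ (misSet adj (V \ DD x)).card := by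
      intro x hx
      have h1 := Finset.card_le_card (hfibsub x hx)
      have hxE : x ∉ EE x := by
        intro h
        exact (Finset.mem_sdiff.mp h).2 (Finset.mem_insert_self _ _)
      have h2 := card_filter_le_mis adj hsymm V x (EE x) hxE
      exact le_trans h1 h2
    have hdeg : ∀ x ∈ insert u N, d ≤ (V.filter (fun w => adj x w)).card := by
      intro x hx
      exact hmin x (hxV x hx)
    have hcardIns : ∀ x : ℕ, (insert x (V.filter (fun w => adj x w))).card
        = (V.filter (fun w => adj x w)).card + 1 := by
      intro x
      apply Finset.card_insert_of_notMem
      intro h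
      exact hirr x (Finset.mem_filter.mp h).2
    have hDDcard : ∀ x ∈ insert u N, d + 1 ≤ (DD x).card := by
      intro x hx
      have h1 : insert x (V.filter (fun w => adj x w)) ⊆ DD x := Finset.subset_union_left
      have h2 := Finset.card_le_card h1
      rw [hcardIns x] at h2
      have h3 := hdeg x hx
      omega
    set ω : ℝ := ((V \ W).card : ℝ) + 1.2 * (W.card : ℝ) with homega
    have hclassbd : ∀ x ∈ insert u N, ∀ c : ℝ,
        c ≤ ((DD x).card : ℝ) + 0.2 * ((DD x ∩ W).card : ℝ) →
        ((Fb x : ℕ) : ℝ) ≤ 2 ^ ((ω - c) / 2) := by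
      intro x hx c hc
      have h1 : ((Fb x : ℕ) : ℝ) ≤ ((misSet adj (V \ DD x)).card : ℝ) := by
        exact_mod_cast hfible x hx
      have htri' : ∀ a ∈ V \ DD x, ∀ b ∈ V \ DD x, ∀ c' ∈ V \ DD x,
          adj a b → adj b c' → adj a c' →
          a ∉ W ∩ (V \ DD x) → b ∉ W ∩ (V \ DD x) → False := by
        intro a ha b hb c' hc' h1' h2' h3' ha' hb'
        have haV := (Finset.mem_sdiff.mp ha).1
        have hbV := (Finset.mem_sdiff.mp hb).1
        have hcV := (Finset.mem_sdiff.mp hc').1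
        refine htri a haV b hbV c' hcV h1' h2' h3' ?_ ?_
        · intro hW'; exact ha' (Finset.mem_inter.mpr ⟨hW', ha⟩)
        · intro hW'; exact hb' (Finset.mem_inter.mpr ⟨hW', hb⟩)
      have h2 := ih (V \ DD x) (hVss x hx) (W ∩ (V \ DD x))
        Finset.inter_subset_right htri'
      have h3 := omega_drop V W (DD x) hWV (hDDV x hx)
      have h4 : ((((V \ DD x) \ (W ∩ (V \ DD x))).card : ℝ)
          + 1.2 * ((W ∩ (V \ DD x)).card : ℝ)) / 2
          = (ω - (((DD x).card : ℝ) + 0.2 * ((DD x ∩ W).card : ℝ))) / 2 := by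
        rw [h3]
      rw [h4] at h2
      have h5 : (2:ℝ) ^ ((ω - (((DD x).card : ℝ) + 0.2 * ((DD x ∩ W).card : ℝ))) / 2)
          ≤ 2 ^ ((ω - c) / 2) :=
        Real.rpow_le_rpow_of_exponent_le (by norm_num) (by linarith)
      exact le_trans (le_trans h1 h2) h5
    have hCge : ∀ x ∈ insert u N,
        ((d : ℝ) + 1) ≤ ((DD x).card : ℝ) + 0.2 * ((DD x ∩ W).card : ℝ) := by
      intro x hx
      have h1 := hDDcard x hx
      have h2 : ((d + 1 : ℕ) : ℝ) ≤ ((DD x).card : ℝ) := by exact_mod_cast h1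
      push_cast at h2
      have h3 : (0:ℝ) ≤ ((DD x ∩ W).card : ℝ) := Nat.cast_nonneg _
      linarith
    have htot : ((misSet adj V).card : ℝ) = ∑ x ∈ insert u N, ((Fb x : ℕ) : ℝ) := by
      rw [hpart]
      push_cast
      ring
    show ((misSet adj V).card : ℝ) ≤ 2 ^ (ω / 2)
    by_cases hd2 : d = 2
    · -- d = 2 : special treatment
      have hN2 : N.card = 2 := by omega
      obtain ⟨a, b, hab, hNab⟩ := Finset.card_eq_two.mp hN2
      obtain ⟨v₁, v₂, hv12, hN12⟩ : ∃ p q, p < q ∧ N = {p, q} := by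
        rcases lt_or_gt_of_ne hab with h | h
        · exact ⟨a, b, h, hNab⟩
        · exact ⟨b, a, h, by rw [hNab, Finset.pair_comm]⟩
      have hv1N : v₁ ∈ N := by rw [hN12]; exact Finset.mem_insert_self _ _
      have hv2N : v₂ ∈ N := by
        rw [hN12]; exact Finset.mem_insert_of_mem (Finset.mem_singleton_self _)
      have hv1V : v₁ ∈ V := hNV hv1N
      have hv2V : v₂ ∈ V := hNV hv2N
      have hadj1 : adj u v₁ := (Finset.mem_filter.mp hv1N).2
      have hadj2 : adj u v₂ := (Finset.mem_filter.mp hv2N).2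
      have huv1 : u ≠ v₁ := fun h => huN (h ▸ hv1N)
      have huv2 : u ≠ v₂ := fun h => huN (h ▸ hv2N)
      have hvne : v₁ ≠ v₂ := ne_of_lt hv12
      have hins : insert u N = {u, v₁, v₂} := by rw [hN12]
      have hu12 : u ∉ ({v₁, v₂} : Finset ℕ) := by simp [huv1, huv2]
      have hsplit : ∑ x ∈ insert u N, ((Fb x : ℕ) : ℝ)
          = ((Fb u : ℕ) : ℝ) + ((Fb v₁ : ℕ) : ℝ) + ((Fb v₂ : ℕ) : ℝ) := by
        rw [hN12, Finset.sum_insert hu12, Finset.sum_pair hvne]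
        ring
      have huIn : u ∈ insert u N := Finset.mem_insert_self _ _
      have hv1In : v₁ ∈ insert u N := Finset.mem_insert_of_mem hv1N
      have hv2In : v₂ ∈ insert u N := Finset.mem_insert_of_mem hv2N
      by_cases hadj12 : adj v₁ v₂
      · -- triangle case
        have hpairadj : ∀ x y : ℕ, x ∈ ({u, v₁, v₂} : Finset ℕ) →
            y ∈ ({u, v₁, v₂} : Finset ℕ) → x ≠ y → adj x y := by
          intro x y hx hy hxy
          simp only [Finset.mem_insert, Finset.mem_singleton] at hx hy
          rcases hx with rfl | rfl | rfl <;> rcases hy with rfl | rfl | rfl <;>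
            first
              | exact absurd rfl hxy
              | assumption
              | exact hsymm _ _ hadj1
              | exact hsymm _ _ hadj2
              | exact hsymm _ _ hadj12
        have hsub3 : ∀ x ∈ insert u N, ({u, v₁, v₂} : Finset ℕ) ⊆ DD x := by
          intro x hx y hy
          by_cases hxy : y = x
          · subst hxy; exact hxDD y
          · have hyV : y ∈ V := by
              simp only [Finset.mem_insert, Finset.mem_singleton] at hy
              rcases hy with rfl | rfl | rfl
              · exact huV
              · exact hv1V
              · exact hv2V
            have hxy3 : x ∈ ({u, v₁, v₂} : Finset ℕ) := by rw [← hins]; exact hx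
            have hadjxy : adj x y := hpairadj x y hxy3 hy (fun h => hxy h.symm)
            exact Finset.mem_union_left _
              (Finset.mem_insert_of_mem (Finset.mem_filter.mpr ⟨hyV, hadjxy⟩))
        have hctriple : ({u, v₁, v₂} : Finset ℕ).card = 3 := by
          rw [Finset.card_insert_of_notMem hu12, Finset.card_pair hvne]
        have hWtwo : ∃ p q : ℕ, p ≠ q ∧ p ∈ W ∧ q ∈ W ∧
            p ∈ ({u, v₁, v₂} : Finset ℕ) ∧ q ∈ ({u, v₁, v₂} : Finset ℕ) := by
          have m1 : u ∈ ({u, v₁, v₂} : Finset ℕ) := Finset.mem_insert_self _ _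
          have m2 : v₁ ∈ ({u, v₁, v₂} : Finset ℕ) := by simp
          have m3 : v₂ ∈ ({u, v₁, v₂} : Finset ℕ) := by simp
          by_cases h1 : u ∈ W
          · by_cases h2 : v₁ ∈ W
            · exact ⟨u, v₁, huv1, h1, h2, m1, m2⟩
            · by_cases h3 : v₂ ∈ W
              · exact ⟨u, v₂, huv2, h1, h3, m1, m3⟩
              · exact absurd (htri v₁ hv1V v₂ hv2V u huV hadj12
                  (hsymm _ _ hadj2) (hsymm _ _ hadj1) h2 h3) (fun h => h)
          · by_cases h2 : v₁ ∈ W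
            · by_cases h3 : v₂ ∈ W
              · exact ⟨v₁, v₂, hvne, h2, h3, m2, m3⟩
              · exact absurd (htri u huV v₂ hv2V v₁ hv1V hadj2
                  (hsymm _ _ hadj12) hadj1 h1 h3) (fun h => h)
            · exact absurd (htri u huV v₁ hv1V v₂ hv2V hadj1
                hadj12 hadj2 h1 h2) (fun h => h)
        obtain ⟨p, q, hpq, hpW, hqW, hp3, hq3⟩ := hWtwo
        have hbd : ∀ x ∈ insert u N, ((Fb x : ℕ) : ℝ) ≤ 2 ^ ((ω - 3.4) / 2) := by
          intro x hx
          apply hclassbd x hx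
          have hc1 : 3 ≤ (DD x).card := by
            have hcc := Finset.card_le_card (hsub3 x hx)
            rw [hctriple] at hcc
            exact hcc
          have hc2 : 2 ≤ (DD x ∩ W).card := by
            have hsubpq : ({p, q} : Finset ℕ) ⊆ DD x ∩ W := by
              intro y hy
              rcases Finset.mem_insert.mp hy with rfl | hy'
              · exact Finset.mem_inter.mpr ⟨hsub3 x hx hp3, hpW⟩
              · rw [Finset.mem_singleton] at hy'
                subst hy'
                exact Finset.mem_inter.mpr ⟨hsub3 x hx hq3, hqW⟩
            have hcc := Finset.card_le_card hsubpq
            rwa [Finset.card_pair hpq] at hcc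
          have c1 : (3:ℝ) ≤ ((DD x).card : ℝ) := by exact_mod_cast hc1
          have c2 : (2:ℝ) ≤ ((DD x ∩ W).card : ℝ) := by exact_mod_cast hc2
          linarith
        calc ((misSet adj V).card : ℝ)
            = ((Fb u : ℕ) : ℝ) + ((Fb v₁ : ℕ) : ℝ) + ((Fb v₂ : ℕ) : ℝ) := by
              rw [htot, hsplit]
          _ ≤ 2 ^ ((ω - 3.4) / 2) + 2 ^ ((ω - 3.4) / 2) + 2 ^ ((ω - 3.4) / 2) := by
              have b1 := hbd u huIn
              have b2 := hbd v₁ hv1In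
              have b3 := hbd v₂ hv2In
              linarith
          _ ≤ 2 ^ (ω / 2) := bound_d2a ω
      · -- no triangle at u
        have hnadj21 : ¬ adj v₂ v₁ := fun h => hadj12 (hsymm _ _ h)
        have hv1E : v₁ ∈ EE v₂ := by
          refine Finset.mem_sdiff.mpr ⟨Finset.mem_filter.mpr ⟨hv1N, hv12⟩, ?_⟩
          intro h
          rcases Finset.mem_insert.mp h with h' | h'
          · exact hvne h'
          · exact hnadj21 (Finset.mem_filter.mp h').2
        have hDD2card : 4 ≤ (DD v₂).card := by
          have hdisj : Disjoint (insert v₂ (V.filter (fun w => adj v₂ w))) (EE v₂) :=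
            Finset.disjoint_sdiff
          have hcu : (DD v₂).card
              = (insert v₂ (V.filter (fun w => adj v₂ w))).card + (EE v₂).card :=
            Finset.card_union_of_disjoint hdisj
          rw [hcu, hcardIns v₂]
          have h1 := hdeg v₂ hv2In
          have h2 : 1 ≤ (EE v₂).card := Finset.card_pos.mpr ⟨v₁, hv1E⟩
          omega
        have hd3 : ((d : ℝ) + 1) = 3 := by rw [hd2]; norm_num
        have hbdu : ((Fb u : ℕ) : ℝ) ≤ 2 ^ ((ω - 3) / 2) := by
          have h := hclassbd u huIn ((d:ℝ) + 1) (hCge u huIn)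
          rwa [hd3] at h
        have hbd1 : ((Fb v₁ : ℕ) : ℝ) ≤ 2 ^ ((ω - 3) / 2) := by
          have h := hclassbd v₁ hv1In ((d:ℝ) + 1) (hCge v₁ hv1In)
          rwa [hd3] at h
        have hbd2 : ((Fb v₂ : ℕ) : ℝ) ≤ 2 ^ ((ω - 4) / 2) := by
          apply hclassbd v₂ hv2In
          have c1 : (4:ℝ) ≤ ((DD v₂).card : ℝ) := by exact_mod_cast hDD2card
          have c2 : (0:ℝ) ≤ ((DD v₂ ∩ W).card : ℝ) := Nat.cast_nonneg _
          linarith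
        calc ((misSet adj V).card : ℝ)
            = ((Fb u : ℕ) : ℝ) + ((Fb v₁ : ℕ) : ℝ) + ((Fb v₂ : ℕ) : ℝ) := by
              rw [htot, hsplit]
          _ ≤ 2 ^ ((ω - 3) / 2) + 2 ^ ((ω - 3) / 2) + 2 ^ ((ω - 4) / 2) := by
              linarith
          _ ≤ 2 ^ (ω / 2) := bound_d2b ω
    · -- d ≠ 2 : uniform bound
      have hk3 : d + 1 ≠ 3 := by omega
      have hgen : ∀ x ∈ insert u N, ((Fb x : ℕ) : ℝ) ≤ 2 ^ ((ω - ((d:ℝ) + 1)) / 2) :=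
        fun x hx => hclassbd x hx _ (hCge x hx)
      have hsum := Finset.sum_le_card_nsmul (insert u N)
        (fun x => ((Fb x : ℕ) : ℝ)) (2 ^ ((ω - ((d:ℝ) + 1)) / 2)) hgen
      have hcardins : (insert u N).card = d + 1 := by
        rw [Finset.card_insert_of_notMem huN]
      rw [hcardins] at hsum
      have hcast : ((d + 1 : ℕ) • ((2:ℝ) ^ ((ω - ((d:ℝ) + 1)) / 2)))
          = ((d:ℝ) + 1) * 2 ^ ((ω - ((d:ℝ) + 1)) / 2) := by
        rw [nsmul_eq_mul]
        push_cast
        ring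
      rw [hcast] at hsum
      have hfin := bound_ge3 ω (d + 1) hk3
      have hexp : ((d + 1 : ℕ) : ℝ) = (d : ℝ) + 1 := by push_cast; ring
      rw [hexp] at hfin
      calc ((misSet adj V).card : ℝ) = ∑ x ∈ insert u N, ((Fb x : ℕ) : ℝ) := htot
        _ ≤ ((d:ℝ) + 1) * 2 ^ ((ω - ((d:ℝ) + 1)) / 2) := hsum
        _ ≤ 2 ^ (ω / 2) := hfin


lemma sumFree_subset {S T : Finset ℕ} (h : SumFree T) (hs : S ⊆ T) : SumFree S :=
  fun x hx y hy hxy => h x (hs hx) y (hs hy) (hs hxy)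

def adjS (S : Finset ℕ) : ℕ → ℕ → Prop :=
  fun a b => a ≠ b ∧ (a + b ∈ S ∨ a - b ∈ S ∨ b - a ∈ S)

instance adjS_dec (S : Finset ℕ) : DecidableRel (adjS S) := fun a b => by
  unfold adjS; infer_instance

lemma adjS_symm (S : Finset ℕ) : ∀ a b, adjS S a b → adjS S b a := by
  intro a b ⟨h1, h2⟩
  refine ⟨h1.symm, ?_⟩
  rw [Nat.add_comm b a]
  tauto

lemma adjS_irr (S : Finset ℕ) : ∀ a, ¬ adjS S a a := fun a h => h.1 rfl

instance sumFree_dec : DecidablePred SumFree := fun S => by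
  unfold SumFree; infer_instance

def BhatS (A B S : Finset ℕ) : Finset ℕ :=
  (B \ A).filter (fun b => SumFree (insert b S))

def WS (A B S : Finset ℕ) : Finset ℕ :=
  (BhatS A B S).filter (fun x => ∃ y ∈ BhatS A B S, x + y ∈ S)

noncomputable def maxSFin (n : ℕ) (F : Finset ℕ) : Finset (Finset ℕ) :=
  @Finset.filter _ (fun M => MaxSF n M) (fun _ => Classical.propDecidable _) F.powerset

lemma mem_maxSFin {n : ℕ} {F M : Finset ℕ} :
    M ∈ maxSFin n F ↔ M ⊆ F ∧ MaxSF n M := by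
  have h := @Finset.mem_filter (Finset ℕ) (fun M => MaxSF n M)
    (fun _ => Classical.propDecidable _) F.powerset M
  rw [maxSFin, h, Finset.mem_powerset]

lemma fmaxIn_eq (n : ℕ) (F : Finset ℕ) : fmaxIn n F = (maxSFin n F).card := by
  rw [fmaxIn, ← Set.ncard_coe_finset]
  congr 1
  ext M
  simp only [Set.mem_setOf_eq, Finset.coe_sort_coe, Finset.mem_coe]
  rw [mem_maxSFin]
  tauto

/-- The key structural lemma: a maximal sum-free set, intersected out of `A`,
is a maximal independent set in the link graph on `BhatS`. -/
lemma fiber_mis {n : ℕ} {A B M : Finset ℕ} (hF : A ∪ B ⊆ Finset.Icc 1 n)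
    (hBsf : SumFree B) (hmax : MaxSF n M) (hMF : M ⊆ A ∪ B) :
    IsMIS (adjS (M ∩ A)) (BhatS A B (M ∩ A)) (M \ A) := by
  obtain ⟨hMIcc, hMsf, hMmax⟩ := hmax
  have hSsubM : M ∩ A ⊆ M := Finset.inter_subset_left
  have hpos : ∀ m ∈ M, 1 ≤ m := fun m hm => (Finset.mem_Icc.mp (hMIcc hm)).1
  refine ⟨?_, ?_, ?_⟩
  · -- T ⊆ Bhat
    intro b hb
    rw [Finset.mem_sdiff] at hb
    have hbB : b ∈ B := by
      rcases Finset.mem_union.mp (hMF hb.1) with h | h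
      · exact absurd h hb.2
      · exact h
    refine Finset.mem_filter.mpr ⟨Finset.mem_sdiff.mpr ⟨hbB, hb.2⟩, ?_⟩
    exact sumFree_subset hMsf (Finset.insert_subset hb.1 hSsubM)
  · -- independence
    intro a ha b hb hadj
    rw [Finset.mem_sdiff] at ha hb
    obtain ⟨hne, hd⟩ := hadj
    rcases hd with h | h | h
    · exact hMsf a ha.1 b hb.1 (hSsubM h)
    · -- a - b ∈ M, b + (a-b) = a
      have h1 : 1 ≤ a - b := hpos _ (hSsubM h)
      have := hMsf b hb.1 (a - b) (hSsubM h)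
      rw [show b + (a - b) = a by omega] at this
      exact this ha.1
    · have h1 : 1 ≤ b - a := hpos _ (hSsubM h)
      have := hMsf a ha.1 (b - a) (hSsubM h)
      rw [show a + (b - a) = b by omega] at this
      exact this hb.1
  · -- domination
    intro b hbB hbT
    have hbmem := Finset.mem_filter.mp hbB
    have hbBA := Finset.mem_sdiff.mp hbmem.1
    have hbS : SumFree (insert b (M ∩ A)) := hbmem.2
    have hbA : b ∉ A := hbBA.2
    have hbM : b ∉ M := by
      intro h
      exact hbT (Finset.mem_sdiff.mpr ⟨h, hbA⟩)
    have hbIcc : b ∈ Finset.Icc 1 n := hF (Finset.mem_union_right _ hbBA.1)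
    have hb1 : 1 ≤ b := (Finset.mem_Icc.mp hbIcc).1
    have hnsf : ¬ SumFree (insert b M) := by
      intro h
      have := hMmax (insert b M) (Finset.insert_subset hbIcc hMIcc) h
        (Finset.subset_insert _ _)
      exact hbM (this ▸ Finset.mem_insert_self b M)
    unfold SumFree at hnsf
    push_neg at hnsf
    obtain ⟨x, hx, y, hy, hxy⟩ := hnsf
    -- split membership of an element of M into S := M ∩ A and T := M \ A
    have hsplit : ∀ m ∈ M, m ∈ M ∩ A ∨ m ∈ M \ A := by
      intro m hm
      by_cases hmA : m ∈ A
      · exact Or.inl (Finset.mem_inter.mpr ⟨hm, hmA⟩)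
      · exact Or.inr (Finset.mem_sdiff.mpr ⟨hm, hmA⟩)
    have hTB : M \ A ⊆ B := by
      intro t ht
      rw [Finset.mem_sdiff] at ht
      rcases Finset.mem_union.mp (hMF ht.1) with h | h
      · exact absurd h ht.2
      · exact h
    have hmemS : ∀ {m}, m ∈ M ∩ A → m ∈ insert b (M ∩ A) :=
      fun h => Finset.mem_insert_of_mem h
    have hbins : b ∈ insert b (M ∩ A) := Finset.mem_insert_self _ _
    have hMne : ∀ m ∈ M, m ≠ b := fun m hm h => hbM (h ▸ hm)
    rcases Finset.mem_insert.mp hx with hxb | hxM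
    · -- x = b
      rw [hxb] at hxy
      rcases Finset.mem_insert.mp hy with hyb | hyM
      · -- y = b : 2b ∈ insert b M
        rw [hyb] at hxy
        rcases Finset.mem_insert.mp hxy with h | h
        · omega
        · rcases hsplit _ h with h' | h'
          · exact absurd (hmemS h') (hbS b hbins b hbins)
          · exact (hBsf b hbBA.1 b hbBA.1 (hTB h')).elim
      · -- y ∈ M, b + y ∈ insert b M
        have hy1 := hpos y hyM
        rcases Finset.mem_insert.mp hxy with h | h
        · omega
        · rcases hsplit y hyM with hyS | hyT
          · rcases hsplit _ h with hzS | hzT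
            · exact (hbS b hbins y (hmemS hyS) (hmemS hzS)).elim
            · refine ⟨b + y, hzT, (hMne _ (Finset.mem_sdiff.mp hzT).1).symm, ?_⟩
              right; right
              rw [show b + y - b = y by omega]
              exact hyS
          · rcases hsplit _ h with hzS | hzT
            · exact ⟨y, hyT, (hMne y hyM).symm, Or.inl hzS⟩
            · exact absurd (hTB hzT) (hBsf b hbBA.1 y (hTB hyT))
    · rcases Finset.mem_insert.mp hy with hyb | hyM
      · -- x ∈ M, y = b : x + b ∈ insert b M
        rw [hyb] at hxy
        have hx1 := hpos x hxM
        rcases Finset.mem_insert.mp hxy with h | h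
        · omega
        · rcases hsplit x hxM with hxS | hxT
          · rcases hsplit _ h with hzS | hzT
            · exact (hbS b hbins x (hmemS hxS) (by rw [Nat.add_comm]; exact hmemS hzS)).elim
            · refine ⟨x + b, hzT, (hMne _ (Finset.mem_sdiff.mp hzT).1).symm, ?_⟩
              right; right
              rw [show x + b - b = x by omega]
              exact hxS
          · rcases hsplit _ h with hzS | hzT
            · refine ⟨x, hxT, (hMne x hxM).symm, Or.inl ?_⟩
              rw [Nat.add_comm]
              exact hzS
            · exact absurd (hTB hzT) (hBsf x (hTB hxT) b hbBA.1)
      · -- x, y ∈ M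
        rcases Finset.mem_insert.mp hxy with h | h
        · -- x + y = b
          rcases hsplit x hxM with hxS | hxT
          · rcases hsplit y hyM with hyS | hyT
            · exact (hbS x (hmemS hxS) y (hmemS hyS) (by rw [h]; exact hbins)).elim
            · refine ⟨y, hyT, (hMne y hyM).symm, Or.inr (Or.inl ?_)⟩
              rw [show b - y = x by omega]
              exact hxS
          · rcases hsplit y hyM with hyS | hyT
            · refine ⟨x, hxT, (hMne x hxM).symm, Or.inr (Or.inl ?_)⟩
              rw [show b - x = y by omega]
              exact hyS
            · have := hBsf x (hTB hxT) y (hTB hyT)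
              rw [h] at this
              exact absurd hbBA.1 this
        · exact (hMsf x hxM y hyM h).elim

lemma fiber_card_le (n : ℕ) (A B : Finset ℕ) (hF : A ∪ B ⊆ Finset.Icc 1 n)
    (hBsf : SumFree B) (S : Finset ℕ) :
    ((maxSFin n (A ∪ B)).filter (fun M => M ∩ A = S)).card
      ≤ (misSet (adjS S) (BhatS A B S)).card := by
  apply Finset.card_le_card_of_injOn (fun M => M \ A)
  · intro M hM
    rw [Finset.mem_coe, Finset.mem_filter] at hM
    obtain ⟨hMm, hMS⟩ := hM
    obtain ⟨hMF, hmax⟩ := mem_maxSFin.mp hMm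
    rw [Finset.mem_coe, mem_misSet]
    have h := fiber_mis hF hBsf hmax hMF
    rwa [hMS] at h
  · intro M1 h1 M2 h2 he
    have hS1 := (Finset.mem_filter.mp h1).2
    have hS2 := (Finset.mem_filter.mp h2).2
    have he' : M1 \ A = M2 \ A := he
    calc M1 = M1 \ A ∪ M1 ∩ A := (Finset.sdiff_union_inter _ _).symm
      _ = M2 \ A ∪ M2 ∩ A := by rw [he', hS1, hS2]
      _ = M2 := Finset.sdiff_union_inter _ _

lemma fiber_empty (n : ℕ) (A B S : Finset ℕ) (hS : ¬ SumFree S) :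
    ((maxSFin n (A ∪ B)).filter (fun M => M ∩ A = S)).card = 0 := by
  rw [Finset.card_eq_zero]
  rw [Finset.eq_empty_iff_forall_notMem]
  intro M hM
  rw [Finset.mem_filter] at hM
  obtain ⟨hMm, hMS⟩ := hM
  obtain ⟨hMF, hmax⟩ := mem_maxSFin.mp hMm
  apply hS
  rw [← hMS]
  exact sumFree_subset hmax.2.1 Finset.inter_subset_left

lemma triangle_W {n : ℕ} (A B S : Finset ℕ) (hS : SumFree S) (hSn : S ⊆ Finset.Icc 1 n) :
    ∀ a ∈ BhatS A B S, ∀ b ∈ BhatS A B S, ∀ c ∈ BhatS A B S,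
      adjS S a b → adjS S b c → adjS S a c → a ∉ WS A B S → b ∉ WS A B S → False := by
  intro a ha b hb c hc hab hbc hac haW hbW
  have h0 : (0 : ℕ) ∉ S := by
    intro h
    have := (Finset.mem_Icc.mp (hSn h)).1
    omega
  have hnsum : ∀ x ∈ BhatS A B S, x ∉ WS A B S → ∀ y ∈ BhatS A B S, x + y ∉ S := by
    intro x hx hxW y hy hxy
    exact hxW (Finset.mem_filter.mpr ⟨hx, ⟨y, hy, hxy⟩⟩)
  have hab' : a + b ∉ S := hnsum a ha haW b hb
  have hac' : a + c ∉ S := hnsum a ha haW c hc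
  have hbc' : b + c ∉ S := hnsum b hb hbW c hc
  have key : ∀ x y z : ℕ, x < y → y < z → y - x ∈ S → z - y ∈ S → z - x ∈ S → False := by
    intro x y z h1 h2 p q r
    have h := hS (y - x) p (z - y) q
    rw [show y - x + (z - y) = z - x by omega] at h
    exact h r
  have D : ∀ p q : ℕ, adjS S p q → p + q ∉ S →
      (p < q ∧ q - p ∈ S) ∨ (q < p ∧ p - q ∈ S) := by
    intro p q hpq hs
    obtain ⟨hne, hd⟩ := hpq
    rcases hd with h | h | h
    · exact absurd h hs
    · have hlt : q < p := by
        rcases Nat.lt_or_ge q p with h' | h'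
        · exact h'
        · exfalso
          rw [show p - q = 0 by omega] at h
          exact h0 h
      exact Or.inr ⟨hlt, h⟩
    · have hlt : p < q := by
        rcases Nat.lt_or_ge p q with h' | h'
        · exact h'
        · exfalso
          rw [show q - p = 0 by omega] at h
          exact h0 h
      exact Or.inl ⟨hlt, h⟩
  rcases D a b hab hab' with ⟨h1, p1⟩ | ⟨h1, p1⟩ <;>
    rcases D b c hbc hbc' with ⟨h2, p2⟩ | ⟨h2, p2⟩ <;>
    rcases D a c hac hac' with ⟨h3, p3⟩ | ⟨h3, p3⟩
  · exact key a b c h1 h2 p1 p2 p3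
  · omega
  · exact key a c b h3 h2 p3 p2 p1
  · exact key c a b h3 h1 p3 p1 p2
  · exact key b a c h1 h3 p1 p3 p2
  · exact key b c a h2 h3 p2 p3 p1
  · omega
  · exact key c b a h2 h1 p2 p1 p3

lemma master_count (n : ℕ) (A B : Finset ℕ) :
    ((fmaxIn n (A ∪ B)) : ℝ)
      = ∑ S ∈ A.powerset,
          (((maxSFin n (A ∪ B)).filter (fun M => M ∩ A = S)).card : ℝ) := by
  rw [fmaxIn_eq]
  have hpart : (maxSFin n (A ∪ B)).card
      = ∑ S ∈ A.powerset, ((maxSFin n (A ∪ B)).filter (fun M => M ∩ A = S)).card :=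
    Finset.card_eq_sum_card_fiberwise
      (fun M _ => Finset.mem_powerset.mpr Finset.inter_subset_right)
  rw [hpart]
  push_cast
  ring


set_option maxHeartbeats 2000000 in
theorem type_b_large_lower_part :
    ∃ ε₀ : ℝ, 0 < ε₀ ∧ ∀ ε : ℝ, 0 < ε → ε ≤ ε₀ →
      ∃ δ α : ℝ, 0 < α ∧ α < δ ∧ δ < ε ∧ ∃ n₀ : ℕ, ∀ n : ℕ, n₀ ≤ n →
        ∀ γ : ℝ, -α ≤ γ → γ ≤ 0.03 →
          ∀ F A B : Finset ℕ, F ⊆ Finset.Icc 1 n → F = A ∪ B →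
            (A.card : ℝ) ≤ α * n → SumFree B →
            (∀ x ∈ B, ((1 / 2 : ℝ) - γ) * n ≤ (x : ℝ)) →
            ((F.card : ℝ) = ((1 / 2 : ℝ) - γ) * n) →
            (ε * n ≤ ((F.filter (fun x => 2 * x ≤ n)).card : ℝ)) →
            (fmaxIn n F : ℝ) ≤ (2 : ℝ) ^ (((1 / 4 : ℝ) - δ) * n) := by
  refine ⟨1, one_pos, ?_⟩
  intro ε hε hε1
  refine ⟨ε/50, ε/100, by positivity, by linarith, by linarith,
    max 1 ⌈(4:ℝ)/ε⌉₊, ?_⟩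
  intro n hn γ hγlo hγhi F A B hFIcc hFAB hAcard hBsf hBlo hFcard hfilter
  subst hFAB
  -- basic facts about n
  have hn1 : 1 ≤ n := le_trans (le_max_left _ _) hn
  have hnpos : (0:ℝ) < n := by exact_mod_cast Nat.lt_of_lt_of_le Nat.zero_lt_one hn1
  have hnR : (4:ℝ)/ε ≤ (n:ℝ) := by
    have h1 : (⌈(4:ℝ)/ε⌉₊ : ℝ) ≤ n := by
      exact_mod_cast le_trans (le_max_right _ _) hn
    exact le_trans (Nat.le_ceil _) h1
  have hεn : 4 ≤ ε * n := by
    rw [div_le_iff₀ hε] at hnR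
    nlinarith
  -- lower half of the filter
  have hfsub : (A ∪ B).filter (fun x => 2 * x ≤ n)
      ⊆ A ∪ (B.filter (fun x => 2 * x ≤ n)) := by
    intro x hx
    rw [Finset.mem_filter, Finset.mem_union] at hx
    rw [Finset.mem_union]
    rcases hx.1 with h | h
    · exact Or.inl h
    · exact Or.inr (Finset.mem_filter.mpr ⟨h, hx.2⟩)
  have hcard1 : ((A ∪ B).filter (fun x => 2 * x ≤ n)).card
      ≤ A.card + (B.filter (fun x => 2 * x ≤ n)).card :=
    le_trans (Finset.card_le_card hfsub) (Finset.card_union_le _ _)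
  have hcard1R : (((A ∪ B).filter (fun x => 2 * x ≤ n)).card : ℝ)
      ≤ (A.card : ℝ) + ((B.filter (fun x => 2 * x ≤ n)).card : ℝ) := by
    exact_mod_cast hcard1
  have hBne : (B.filter (fun x => 2 * x ≤ n)).Nonempty := by
    rw [Finset.nonempty_iff_ne_empty]
    intro h
    rw [h] at hcard1R
    simp only [Finset.card_empty, Nat.cast_zero, add_zero] at hcard1R
    nlinarith [hfilter, hAcard]
  obtain ⟨x0, hx0⟩ := hBne
  have hx0' := Finset.mem_filter.mp hx0
  have hγ0 : 0 ≤ γ := by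
    have h1 := hBlo x0 hx0'.1
    have h2 : (2 * x0 : ℕ) ≤ n := hx0'.2
    have h3 : ((2 * x0 : ℕ) : ℝ) ≤ (n : ℝ) := by exact_mod_cast h2
    push_cast at h3
    nlinarith
  -- card bound for the filtered part of B
  have hBfil : ((B.filter (fun x => 2 * x ≤ n)).card : ℝ) ≤ γ * n + 1 := by
    have hsub2 : B.filter (fun x => 2 * x ≤ n)
        ⊆ Finset.Icc ⌈((1/2:ℝ) - γ) * n⌉₊ (n / 2) := by
      intro y hy
      rw [Finset.mem_filter] at hy
      rw [Finset.mem_Icc]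
      refine ⟨Nat.ceil_le.mpr (hBlo y hy.1), ?_⟩
      omega
    have hcic := Finset.card_le_card hsub2
    rw [Nat.card_Icc] at hcic
    by_cases hle : ⌈((1/2:ℝ) - γ) * n⌉₊ ≤ n / 2 + 1
    · have hc3 : ((B.filter (fun x => 2 * x ≤ n)).card : ℝ)
          ≤ ((n / 2 + 1 : ℕ) : ℝ) - (⌈((1/2:ℝ) - γ) * n⌉₊ : ℝ) := by
        rw [← Nat.cast_sub hle]
        exact_mod_cast hcic
      have hfloor : ((n / 2 : ℕ) : ℝ) ≤ (n:ℝ)/2 := by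
        have h4 : (2 * (n / 2) : ℕ) ≤ n := by omega
        have h5 : ((2 * (n / 2) : ℕ) : ℝ) ≤ (n : ℝ) := by exact_mod_cast h4
        push_cast at h5
        linarith
      have hceil : ((1/2:ℝ) - γ) * n ≤ (⌈((1/2:ℝ) - γ) * n⌉₊ : ℝ) := Nat.le_ceil _
      push_cast at hc3
      linarith
    · have h0 : n / 2 + 1 - ⌈((1/2:ℝ) - γ) * n⌉₊ = 0 :=
        Nat.sub_eq_zero_of_le (le_of_not_ge hle)
      rw [h0] at hcic
      have hz : ((B.filter (fun x => 2 * x ≤ n)).card : ℝ) = 0 := by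
        exact_mod_cast Nat.le_zero.mp hcic
      rw [hz]
      nlinarith
  have hγn : 0.99 * (ε * n) - 1 ≤ γ * n := by
    nlinarith [hfilter, hAcard, hcard1R, hBfil]
  -- per-fiber bound
  set K : ℝ := 2 ^ ((((1/2:ℝ) - γ) * n + 0.2 * (2 * γ * n + 1)) / 2) with hK
  have hKpos : (0:ℝ) < K := Real.rpow_pos_of_pos (by norm_num) _
  have hSbound : ∀ S ∈ A.powerset,
      (((maxSFin n (A ∪ B)).filter (fun M => M ∩ A = S)).card : ℝ) ≤ K := by
    intro S hSp
    by_cases hSsf : SumFree S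
    · have hSA : S ⊆ A := Finset.mem_powerset.mp hSp
      have hSn : S ⊆ Finset.Icc 1 n := fun s hs =>
        hFIcc (Finset.mem_union_left _ (hSA hs))
      have htri := triangle_W (n := n) A B S hSsf hSn
      have hWsub : WS A B S ⊆ BhatS A B S := Finset.filter_subset _ _
      have hmis := mis_card_bound (adjS S) (adjS_symm S) (adjS_irr S)
        (BhatS A B S) (WS A B S) hWsub htri
      have hfc : (((maxSFin n (A ∪ B)).filter (fun M => M ∩ A = S)).card : ℝ)
          ≤ ((misSet (adjS S) (BhatS A B S)).card : ℝ) := by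
        exact_mod_cast fiber_card_le n A B hFIcc hBsf S
      have hVcard : ((BhatS A B S).card : ℝ) ≤ ((1/2:ℝ) - γ) * n := by
        have h1 : BhatS A B S ⊆ A ∪ B := by
          intro y hy
          exact Finset.mem_union_right _
            (Finset.mem_sdiff.mp (Finset.mem_of_mem_filter y hy)).1
        have h3 : ((BhatS A B S).card : ℝ) ≤ ((A ∪ B).card : ℝ) := by
          exact_mod_cast Finset.card_le_card h1
        rw [hFcard] at h3
        exact h3
      have hWcard : ((WS A B S).card : ℝ) ≤ 2 * γ * n + 1 := by
        have hsub3 : WS A B S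
            ⊆ Finset.Icc ⌈((1/2:ℝ) - γ) * n⌉₊ ⌊((1/2:ℝ) + γ) * n⌋₊ := by
          intro y hy
          rw [WS, Finset.mem_filter] at hy
          obtain ⟨hyB, z, hzB, hyz⟩ := hy
          have hyB' : y ∈ B :=
            (Finset.mem_sdiff.mp (Finset.mem_of_mem_filter y hyB)).1
          have hzB' : z ∈ B :=
            (Finset.mem_sdiff.mp (Finset.mem_of_mem_filter z hzB)).1
          have h1 : ((1/2:ℝ) - γ) * n ≤ (y:ℝ) := hBlo y hyB'
          have h2 : ((1/2:ℝ) - γ) * n ≤ (z:ℝ) := hBlo z hzB'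
          have h3 : y + z ≤ n := (Finset.mem_Icc.mp (hSn hyz)).2
          have h3' : ((y + z : ℕ) : ℝ) ≤ (n:ℝ) := by exact_mod_cast h3
          push_cast at h3'
          have h4 : (y:ℝ) ≤ ((1/2:ℝ) + γ) * n := by linarith
          rw [Finset.mem_Icc]
          exact ⟨Nat.ceil_le.mpr h1, Nat.le_floor h4⟩
        have hxc := Finset.card_le_card hsub3
        rw [Nat.card_Icc] at hxc
        by_cases hle : ⌈((1/2:ℝ) - γ) * n⌉₊ ≤ ⌊((1/2:ℝ) + γ) * n⌋₊ + 1
        · have hc2 : ((WS A B S).card : ℝ)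
              ≤ ((⌊((1/2:ℝ) + γ) * n⌋₊ + 1 : ℕ) : ℝ) - (⌈((1/2:ℝ) - γ) * n⌉₊ : ℝ) := by
            rw [← Nat.cast_sub hle]
            exact_mod_cast hxc
          have hfl : (⌊((1/2:ℝ) + γ) * n⌋₊ : ℝ) ≤ ((1/2:ℝ) + γ) * n :=
            Nat.floor_le (mul_nonneg (by linarith) hnpos.le)
          have hcl : ((1/2:ℝ) - γ) * n ≤ (⌈((1/2:ℝ) - γ) * n⌉₊ : ℝ) := Nat.le_ceil _
          push_cast at hc2
          linarith
        · have h0 : ⌊((1/2:ℝ) + γ) * n⌋₊ + 1 - ⌈((1/2:ℝ) - γ) * n⌉₊ = 0 :=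
            Nat.sub_eq_zero_of_le (le_of_not_ge hle)
          rw [h0] at hxc
          have hz : ((WS A B S).card : ℝ) = 0 := by
            exact_mod_cast Nat.le_zero.mp hxc
          rw [hz]
          nlinarith [hγ0, hnpos.le]
      have hsdc : (((BhatS A B S) \ (WS A B S)).card : ℝ)
          = ((BhatS A B S).card : ℝ) - ((WS A B S).card : ℝ) := by
        rw [Finset.card_sdiff_of_subset hWsub, Nat.cast_sub (Finset.card_le_card hWsub)]
      have hexp : ((((BhatS A B S) \ (WS A B S)).card : ℝ)
            + 1.2 * ((WS A B S).card : ℝ)) / 2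
          ≤ (((1/2:ℝ) - γ) * n + 0.2 * (2 * γ * n + 1)) / 2 := by
        rw [hsdc]
        linarith
      calc (((maxSFin n (A ∪ B)).filter (fun M => M ∩ A = S)).card : ℝ)
          ≤ ((misSet (adjS S) (BhatS A B S)).card : ℝ) := hfc
        _ ≤ 2 ^ (((((BhatS A B S) \ (WS A B S)).card : ℝ)
            + 1.2 * ((WS A B S).card : ℝ)) / 2) := hmis
        _ ≤ K := Real.rpow_le_rpow_of_exponent_le (by norm_num) hexp
    · have h0 := fiber_empty n A B S hSsf
      rw [h0]
      exact_mod_cast hKpos.le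
  -- sum up
  have hsum : (fmaxIn n (A ∪ B) : ℝ) ≤ ((2:ℝ) ^ (A.card : ℝ)) * K := by
    rw [master_count]
    have h1 := Finset.sum_le_sum hSbound
    have h2 : ∑ _S ∈ A.powerset, K = (A.powerset.card : ℝ) * K := by
      rw [Finset.sum_const, nsmul_eq_mul]
    have h3 : ((A.powerset.card : ℕ) : ℝ) = (2:ℝ) ^ (A.card : ℝ) := by
      rw [Finset.card_powerset]
      push_cast
      rw [← Real.rpow_natCast 2 A.card]
    calc ∑ S ∈ A.powerset,
          (((maxSFin n (A ∪ B)).filter (fun M => M ∩ A = S)).card : ℝ)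
        ≤ ∑ _S ∈ A.powerset, K := h1
      _ = (A.powerset.card : ℝ) * K := h2
      _ = ((2:ℝ) ^ (A.card : ℝ)) * K := by rw [h3]
  have hAcast : (A.card : ℝ) ≤ (ε/100) * n := hAcard
  have hfinalexp : (A.card : ℝ) + (((1/2:ℝ) - γ) * n + 0.2 * (2 * γ * n + 1)) / 2
      ≤ ((1/4:ℝ) - ε/50) * n := by
    linarith [hγn, hεn, hAcast]
  calc (fmaxIn n (A ∪ B) : ℝ)
      ≤ ((2:ℝ) ^ (A.card : ℝ)) * K := hsum
    _ = (2:ℝ) ^ ((A.card : ℝ)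
        + (((1/2:ℝ) - γ) * n + 0.2 * (2 * γ * n + 1)) / 2) := by
        rw [hK, ← Real.rpow_add (by norm_num)]
    _ ≤ (2:ℝ) ^ (((1/4:ℝ) - ε/50) * n) :=
        Real.rpow_le_rpow_of_exponent_le (by norm_num) hfinalexp

end TypeB

/-- Type (b) containers with many elements below `n/2` contain few maximal sum-free
subsets of `[n]`. -/
theorem type_b_large_lower_part :
    ∃ ε₀ : ℝ, 0 < ε₀ ∧ ∀ ε : ℝ, 0 < ε → ε ≤ ε₀ →
      ∃ δ α : ℝ, 0 < α ∧ α < δ ∧ δ < ε ∧ ∃ n₀ : ℕ, ∀ n : ℕ, n₀ ≤ n →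
        ∀ γ : ℝ, -α ≤ γ → γ ≤ 0.03 →
          ∀ F A B : Finset ℕ, F ⊆ Finset.Icc 1 n → F = A ∪ B →
            (A.card : ℝ) ≤ α * n → SumFree B →
            (∀ x ∈ B, ((1 / 2 : ℝ) - γ) * n ≤ (x : ℝ)) →
            ((F.card : ℝ) = ((1 / 2 : ℝ) - γ) * n) →
            (ε * n ≤ ((F.filter (fun x => 2 * x ≤ n)).card : ℝ)) →
            (fmaxIn n F : ℝ) ≤ (2 : ℝ) ^ (((1 / 4 : ℝ) - δ) * n) :=
  TypeB.type_b_large_lower_part
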